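/- Let η be a real random variable with finite Grand Lebesgue norm K = sup_{p ∈ (1,b)} |η|_p/ψ(p) ∈ (0,∞) for a strictly positive function ψ on (1,b). Define h(p) = p·ln ψ(p) and its Young–Fenchel transform h*(t) = sup_{p∈(1,b)} (pt − h(p)). Then for every t ≥ eK, P(|η| > t) ≤ exp(−h*(ln(t/K))). -/

import Mathlib

open MeasureTheory Real Set

/-- Grand Lebesgue Space tail estimate: if `|η|_p ≤ K ψ(p)` for all `p ∈ (1,b)`
with `K > 0`, and `h(p) = p ln ψ(p)` with Young–Fenchel transform
`h*(t) = sup_{p ∈ (1,b)} (p t − h(p))`, then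
`P(|η| > t) ≤ exp(−h*(ln(t/K)))` for all `t ≥ e K`. -/
theorem gls_tail_estimate
    {Ω : Type*} [MeasurableSpace Ω] (μ : Measure Ω) [IsProbabilityMeasure μ]
    (η : Ω → ℝ) (hη : Measurable η) (b : ℝ) (hb : 1 < b)
    (ψ : ℝ → ℝ) (hψ : ∀ p ∈ Ioo (1 : ℝ) b, 0 < ψ p)
    (K : ℝ) (hK : 0 < K)
    (hmom : ∀ p ∈ Ioo (1 : ℝ) b,
      (∫⁻ ω, ENNReal.ofReal (|η ω| ^ p) ∂μ) ^ (1 / p) ≤ ENNReal.ofReal (K * ψ p)) :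
    ∀ t : ℝ, Real.exp 1 * K ≤ t →
      μ {ω | t < |η ω|} ≤ ENNReal.ofReal
        (Real.exp (-(sSup {r : ℝ | ∃ p ∈ Ioo (1 : ℝ) b,
          r = p * Real.log (t / K) - p * Real.log (ψ p)}))) := by
  intro t ht
  set S : Set ℝ := {r : ℝ | ∃ p ∈ Ioo (1 : ℝ) b,
      r = p * Real.log (t / K) - p * Real.log (ψ p)} with hS
  have ht0 : 0 < t := lt_of_lt_of_le (by positivity) ht
  -- the Markov bound for each element of S
  have key : ∀ r ∈ S, μ {ω | t < |η ω|} ≤ ENNReal.ofReal (Real.exp (-r)) := by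
    rintro r ⟨p, hp, rfl⟩
    have hp0 : (0 : ℝ) < p := lt_trans one_pos hp.1
    have hψp : 0 < ψ p := hψ p hp
    have h1 : (∫⁻ ω, ENNReal.ofReal (|η ω| ^ p) ∂μ) ≤ ENNReal.ofReal ((K * ψ p) ^ p) := by
      have := ENNReal.rpow_le_rpow (hmom p hp) (le_of_lt hp0)
      rwa [← ENNReal.rpow_mul, one_div_mul_cancel (ne_of_gt hp0), ENNReal.rpow_one,
        ENNReal.ofReal_rpow_of_pos (by positivity)] at this
    have hsub : {ω | t < |η ω|} ⊆ {ω | ENNReal.ofReal (t ^ p) ≤ ENNReal.ofReal (|η ω| ^ p)} := by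
      intro ω hω
      exact ENNReal.ofReal_le_ofReal
        (Real.rpow_le_rpow (le_of_lt ht0) (le_of_lt hω) (le_of_lt hp0))
    have hmeas : AEMeasurable (fun ω => ENNReal.ofReal (|η ω| ^ p)) μ :=
      (ENNReal.measurable_ofReal.comp (by fun_prop)).aemeasurable
    have h2 : ENNReal.ofReal (t ^ p) * μ {ω | t < |η ω|} ≤
        ∫⁻ ω, ENNReal.ofReal (|η ω| ^ p) ∂μ := by
      calc ENNReal.ofReal (t ^ p) * μ {ω | t < |η ω|}
          ≤ ENNReal.ofReal (t ^ p) *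
            μ {ω | ENNReal.ofReal (t ^ p) ≤ ENNReal.ofReal (|η ω| ^ p)} := by
            exact mul_le_mul_right (measure_mono hsub) _
        _ ≤ ∫⁻ ω, ENNReal.ofReal (|η ω| ^ p) ∂μ :=
            mul_meas_ge_le_lintegral₀ hmeas _
    have htp : (0 : ℝ) < t ^ p := Real.rpow_pos_of_pos ht0 p
    have h3 : μ {ω | t < |η ω|} ≤ ENNReal.ofReal ((K * ψ p) ^ p / t ^ p) := by
      rw [ENNReal.ofReal_div_of_pos htp]
      rw [ENNReal.le_div_iff_mul_le (Or.inl (by simpa using htp))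
        (Or.inl ENNReal.ofReal_ne_top), mul_comm]
      exact le_trans h2 h1
    have heq : (K * ψ p) ^ p / t ^ p =
        Real.exp (-(p * Real.log (t / K) - p * Real.log (ψ p))) := by
      rw [← Real.div_rpow (by positivity) (le_of_lt ht0),
        Real.rpow_def_of_pos (by positivity),
        Real.log_div (by positivity) (ne_of_gt ht0),
        Real.log_mul (ne_of_gt hK) (ne_of_gt hψp),
        Real.log_div (ne_of_gt ht0) (ne_of_gt hK)]
      ring_nf
    rwa [heq] at h3
  -- S is nonempty
  have hSne : S.Nonempty := by
    refine ⟨_, (1 + b) / 2, ⟨by linarith, by linarith⟩, rfl⟩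
  by_cases hbdd : BddAbove S
  · -- use the sup bound
    have hfin : μ {ω | t < |η ω|} ≠ ⊤ := measure_ne_top μ _
    by_cases hz : μ {ω | t < |η ω|} = 0
    · rw [hz]; exact zero_le
    · set m := (μ {ω | t < |η ω|}).toReal with hm
      have hm0 : 0 < m := ENNReal.toReal_pos hz hfin
      have hub : ∀ r ∈ S, r ≤ -Real.log m := by
        intro r hr
        have h := key r hr
        have : m ≤ Real.exp (-r) :=
          ENNReal.toReal_le_of_le_ofReal (le_of_lt (Real.exp_pos _)) h
        have := Real.log_le_log hm0 this
        rw [Real.log_exp] at this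
        linarith
      have hsup : sSup S ≤ -Real.log m := csSup_le hSne hub
      have : m ≤ Real.exp (-sSup S) := by
        calc m = Real.exp (Real.log m) := (Real.exp_log hm0).symm
          _ ≤ Real.exp (-sSup S) := Real.exp_le_exp.mpr (by linarith)
      calc μ {ω | t < |η ω|} = ENNReal.ofReal m := (ENNReal.ofReal_toReal hfin).symm
        _ ≤ ENNReal.ofReal (Real.exp (-sSup S)) := ENNReal.ofReal_le_ofReal this
  · -- unbounded: sSup = 0, bound is 1
    rw [Real.sSup_of_not_bddAbove hbdd]
    simp only [neg_zero, Real.exp_zero, ENNReal.ofReal_one]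
    exact prob_le_one
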